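/- Let A ≥ 1 and A₁ ≥ 1 be integers, let d₁ ≥ d₀ ≥ 0 be integers, and let κ be a real number with 0 < κ < A. For each integer d ≥ 3 let 𝓕_d be a finite set of homogeneous polynomials of degree d in two variables with integer coefficients, and assume: (iii) #𝓕_d ≤ d^{A₁} for every d ≥ 3, and (v) for every d ≥ max(d₁, d₀+1), every F ∈ 𝓕_d and every (x,y) ∈ ℤ² with F(x,y) ≠ 0 and max(|x|,|y|) ≥ A, one has max(|x|,|y|) ≤ κ·|F(x,y)|^{1/(d−d₀)}. Then for every ε > 0 there exist positive integers N₀ and D such that for every integer N ≥ N₀, the number of integers m ∈ [−N, N] for which there exist an integer d ≥ D, a form F ∈ 𝓕_d and (x,y) ∈ ℤ² with max(|x|,|y|) ≥ A and F(x,y) = m, is at most N^ε. -/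

import Mathlib

/-- Lemma 2.3: a family of binary forms satisfying conditions (iii) and (v) of the definition
of an `(A, A₁, d₀, d₁, κ)`-regular family satisfies the counting condition (ii) in the
definition of a regular family. -/
theorem regular_family_counting
    (A A₁ : ℕ) (hA : 1 ≤ A) (hA₁ : 1 ≤ A₁)
    (d₀ d₁ : ℕ) (hd₀d₁ : d₀ ≤ d₁)
    (κ : ℝ) (hκpos : 0 < κ) (hκA : κ < (A : ℝ))
    (F : ℕ → Finset (MvPolynomial (Fin 2) ℤ))
    (hhom : ∀ d : ℕ, 3 ≤ d → ∀ f ∈ F d, f.IsHomogeneous d)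
    (hcard : ∀ d : ℕ, 3 ≤ d → (F d).card ≤ d ^ A₁)
    (hv : ∀ d : ℕ, max d₁ (d₀ + 1) ≤ d → ∀ f ∈ F d, ∀ x y : ℤ,
      MvPolynomial.eval ![x, y] f ≠ 0 → (A : ℤ) ≤ max |x| |y| →
      ((max |x| |y| : ℤ) : ℝ) ≤
        κ * ((|MvPolynomial.eval ![x, y] f| : ℤ) : ℝ) ^ ((1 : ℝ) / ((d : ℝ) - (d₀ : ℝ)))) :
    ∀ ε : ℝ, 0 < ε → ∃ N₀ D : ℕ, 0 < N₀ ∧ 0 < D ∧ ∀ N : ℕ, N₀ ≤ N →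
      (({m : ℤ | |m| ≤ (N : ℤ) ∧ ∃ d : ℕ, D ≤ d ∧ ∃ f ∈ F d, ∃ x y : ℤ,
          (A : ℤ) ≤ max |x| |y| ∧ MvPolynomial.eval ![x, y] f = m}).ncard : ℝ)
        ≤ (N : ℝ) ^ ε := by
  intro ε hε
  -- basic constants
  set c : ℝ := (A : ℝ) / κ with hc_def
  have hApos : (0:ℝ) < A := by exact_mod_cast Nat.lt_of_lt_of_le Nat.zero_lt_one hA
  have hc1 : 1 < c := (one_lt_div hκpos).mpr hκA
  have hlogc : 0 < Real.log c := Real.log_pos hc1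
  -- degree threshold
  set k₀ : ℕ := ⌈(4:ℝ)/ε⌉₊ + 1 with hk₀_def
  set D : ℕ := max (max d₁ (d₀+1)) (max 3 (d₀ + k₀)) with hD_def
  have hD3 : 3 ≤ D := le_max_of_le_right (le_max_left _ _)
  have hDd₁ : max d₁ (d₀+1) ≤ D := le_max_left _ _
  have hDk₀ : d₀ + k₀ ≤ D := le_max_of_le_right (le_max_right _ _)
  have hDd₀1 : d₀ + 1 ≤ D := le_trans (le_max_right _ _) hDd₁
  set R : ℝ := (D : ℝ) - (d₀ : ℝ) with hR_def
  have hR1 : 1 ≤ R := by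
    have : ((d₀:ℝ) + 1) ≤ (D:ℝ) := by exact_mod_cast hDd₀1
    linarith
  have hR0 : 0 < R := lt_of_lt_of_le one_pos hR1
  have hRε : 2 / R ≤ ε / 2 := by
    have h4 : (4:ℝ)/ε ≤ R := by
      have h1 : (4:ℝ)/ε ≤ (k₀:ℕ) := by
        rw [hk₀_def]; push_cast
        have := Nat.le_ceil ((4:ℝ)/ε)
        linarith
      have h2 : (k₀:ℝ) ≤ R := by
        rw [hR_def]
        have : (d₀ + k₀ : ℝ) ≤ (D:ℝ) := by exact_mod_cast hDk₀
        linarith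
      linarith
    have h40 : (0:ℝ) < 4/ε := by positivity
    calc 2 / R ≤ 2 / (4/ε) := by
          apply div_le_div_of_nonneg_left (by norm_num) h40 h4
    _ = ε / 2 := by field_simp; ring
  -- auxiliary constants for the final estimate
  set δ : ℝ := ε / (8 * (A₁ + 1)) with hδ_def
  have hδ0 : 0 < δ := by positivity
  set C₁ : ℝ := (d₀:ℝ) + 1 + 1 / Real.log c with hC₁_def
  have hC₁0 : 0 < C₁ := by positivity
  set C₂ : ℝ := (C₁ / δ) ^ (A₁ + 1) with hC₂_def
  have hC₂0 : 0 < C₂ := by positivity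
  set C₃ : ℝ := C₂ * (2*κ+1)^2 with hC₃_def
  have hC₃0 : 0 < C₃ := by positivity
  set N₀ : ℕ := max 3 (⌈(1+C₃) ^ ((8:ℝ)/(3*ε))⌉₊ + 1) with hN₀_def
  refine ⟨N₀, D, lt_of_lt_of_le (by norm_num) (le_max_left _ _), lt_of_lt_of_le (by norm_num) hD3, ?_⟩
  intro N hN
  have hN3 : 3 ≤ N := le_trans (le_max_left _ _) hN
  have hN0 : (0:ℝ) < N := by exact_mod_cast Nat.lt_of_lt_of_le (by norm_num) hN3
  have hN1 : (1:ℝ) ≤ N := by exact_mod_cast Nat.le_trans (by norm_num) hN3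
  set L : ℝ := Real.log N with hL_def
  have hL1 : 1 ≤ L := by
    rw [hL_def, Real.le_log_iff_exp_le hN0]
    calc Real.exp 1 ≤ 2.7182818286 := Real.exp_one_lt_d9.le
    _ ≤ (3:ℝ) := by norm_num
    _ ≤ N := by exact_mod_cast hN3
  set B : ℕ := ⌊κ * (N:ℝ) ^ ((1:ℝ)/R)⌋₊ with hB_def
  set M : ℕ := d₀ + ⌊L / Real.log c⌋₊ with hM_def
  set box : Finset (ℤ × ℤ) := Finset.Icc (-(B:ℤ)) B ×ˢ Finset.Icc (-(B:ℤ)) B with hbox_def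
  set G : Finset ℤ := insert (0:ℤ) ((Finset.Icc D M).biUnion (fun d => (F d).biUnion
      (fun f => box.image (fun p : ℤ × ℤ => MvPolynomial.eval ![p.1, p.2] f)))) with hG_def
  -- Step 1: the set is contained in G
  have hsub : {m : ℤ | |m| ≤ (N : ℤ) ∧ ∃ d : ℕ, D ≤ d ∧ ∃ f ∈ F d, ∃ x y : ℤ,
      (A : ℤ) ≤ max |x| |y| ∧ MvPolynomial.eval ![x, y] f = m} ⊆ ↑G := by
    rintro m ⟨hm, d, hdD, f, hf, x, y, hxy, heval⟩
    by_cases hm0 : m = 0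
    · simp [hG_def, hm0]
    · have hdmax : max d₁ (d₀+1) ≤ d := le_trans hDd₁ hdD
      have hd₀d : d₀ ≤ d := by omega
      have hne : MvPolynomial.eval ![x,y] f ≠ 0 := by rw [heval]; exact hm0
      have hkey := hv d hdmax f hf x y hne hxy
      rw [heval] at hkey
      set r : ℝ := (d:ℝ) - (d₀:ℝ) with hr_def
      have hRr : R ≤ r := by
        rw [hR_def, hr_def]
        have : (D:ℝ) ≤ (d:ℝ) := by exact_mod_cast hdD
        linarith
      have hr0 : 0 < r := lt_of_lt_of_le hR0 hRr
      have hm1 : (1:ℝ) ≤ ((|m|:ℤ):ℝ) := by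
        have : (1:ℤ) ≤ |m| := Int.one_le_abs (by exact_mod_cast hm0)
        exact_mod_cast this
      have hmN : ((|m|:ℤ):ℝ) ≤ (N:ℝ) := by exact_mod_cast hm
      -- bound the degree: d ≤ M
      have hAmax : (A:ℝ) ≤ ((max |x| |y| : ℤ):ℝ) := by exact_mod_cast hxy
      have hct : c ≤ ((|m|:ℤ):ℝ) ^ ((1:ℝ)/r) := by
        rw [hc_def, div_le_iff₀ hκpos]
        calc (A:ℝ) ≤ κ * ((|m|:ℤ):ℝ) ^ ((1:ℝ)/r) := le_trans hAmax hkey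
        _ = ((|m|:ℤ):ℝ) ^ ((1:ℝ)/r) * κ := mul_comm _ _
      have hcr : c ^ r ≤ ((|m|:ℤ):ℝ) := by
        have habs0 : (0:ℝ) ≤ ((|m|:ℤ):ℝ) := le_trans zero_le_one hm1
        have h := Real.rpow_le_rpow (le_of_lt (lt_trans one_pos hc1)) hct hr0.le
        rwa [← Real.rpow_mul habs0, one_div_mul_cancel hr0.ne', Real.rpow_one] at h
      have hcN : c ^ r ≤ (N:ℝ) := le_trans hcr hmN
      have hlog : r * Real.log c ≤ L := by
        have h := Real.log_le_log (by positivity) hcN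
        rwa [Real.log_rpow (by positivity), ← hL_def] at h
      have hdM : d ≤ M := by
        have hfl : d - d₀ ≤ ⌊L / Real.log c⌋₊ := by
          apply Nat.le_floor
          rw [le_div_iff₀ hlogc]
          calc ((d - d₀ : ℕ):ℝ) * Real.log c = r * Real.log c := by
                rw [hr_def, Nat.cast_sub hd₀d]
          _ ≤ L := hlog
        omega
      -- bound the solutions: the box
      have hmaxbound : ((max |x| |y| : ℤ):ℝ) ≤ κ * (N:ℝ) ^ ((1:ℝ)/R) := by
        calc _ ≤ κ * ((|m|:ℤ):ℝ) ^ ((1:ℝ)/r) := hkey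
        _ ≤ κ * (N:ℝ) ^ ((1:ℝ)/r) := by
            apply mul_le_mul_of_nonneg_left _ hκpos.le
            exact Real.rpow_le_rpow (by linarith) hmN (by positivity)
        _ ≤ κ * (N:ℝ) ^ ((1:ℝ)/R) := by
            apply mul_le_mul_of_nonneg_left _ hκpos.le
            exact Real.rpow_le_rpow_of_exponent_le hN1
              (one_div_le_one_div_of_le hR0 hRr)
      have habs : ∀ z : ℤ, ((|z|:ℤ):ℝ) ≤ κ * (N:ℝ) ^ ((1:ℝ)/R) → -(B:ℤ) ≤ z ∧ z ≤ (B:ℤ) := by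
        intro z hz
        have h2 : z.natAbs ≤ B := by
          apply Nat.le_floor
          calc ((z.natAbs : ℕ):ℝ) = ((|z|:ℤ):ℝ) := by
                simp [Nat.cast_natAbs, Int.cast_abs]
          _ ≤ _ := hz
        have h3 : |z| ≤ (B:ℤ) := by
          rw [Int.abs_eq_natAbs]; exact_mod_cast h2
        exact abs_le.mp h3
      have hxmax : ((|x|:ℤ):ℝ) ≤ ((max |x| |y| : ℤ):ℝ) := by
        exact_mod_cast le_max_left |x| |y|
      have hymax : ((|y|:ℤ):ℝ) ≤ ((max |x| |y| : ℤ):ℝ) := by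
        exact_mod_cast le_max_right |x| |y|
      have hxB := habs x (le_trans hxmax hmaxbound)
      have hyB := habs y (le_trans hymax hmaxbound)
      -- conclude membership
      rw [hG_def]
      refine Finset.mem_coe.mpr (Finset.mem_insert_of_mem ?_)
      refine Finset.mem_biUnion.mpr ⟨d, Finset.mem_Icc.mpr ⟨hdD, hdM⟩, ?_⟩
      refine Finset.mem_biUnion.mpr ⟨f, hf, ?_⟩
      refine Finset.mem_image.mpr ⟨(x, y), ?_, heval⟩
      rw [hbox_def]
      exact Finset.mem_product.mpr ⟨Finset.mem_Icc.mpr hxB, Finset.mem_Icc.mpr hyB⟩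
  -- Step 2: cardinality bound in ℕ
  have hIcc : (Finset.Icc (-(B:ℤ)) (B:ℤ)).card = 2*B+1 := by
    rw [Int.card_Icc]; omega
  have hboxcard : box.card = (2*B+1)^2 := by
    rw [hbox_def, Finset.card_product, hIcc]; ring
  have hcardG : G.card ≤ 1 + (M+1) * (M ^ A₁ * (2*B+1)^2) := by
    have hinner : ∀ d ∈ Finset.Icc D M, ((F d).biUnion
        (fun f => box.image (fun p : ℤ × ℤ => MvPolynomial.eval ![p.1, p.2] f))).card
        ≤ M ^ A₁ * (2*B+1)^2 := by
      intro d hd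
      rw [Finset.mem_Icc] at hd
      calc _ ≤ ∑ f ∈ F d, (box.image
            (fun p : ℤ × ℤ => MvPolynomial.eval ![p.1, p.2] f)).card :=
            Finset.card_biUnion_le
      _ ≤ ∑ _f ∈ F d, (2*B+1)^2 := by
            apply Finset.sum_le_sum
            intro f _
            exact le_trans (Finset.card_image_le) (le_of_eq hboxcard)
      _ = (F d).card * (2*B+1)^2 := by rw [Finset.sum_const, smul_eq_mul]
      _ ≤ d ^ A₁ * (2*B+1)^2 := by
            exact Nat.mul_le_mul_right _ (hcard d (le_trans hD3 hd.1))
      _ ≤ M ^ A₁ * (2*B+1)^2 := by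
            exact Nat.mul_le_mul_right _ (Nat.pow_le_pow_left hd.2 _)
    calc G.card ≤ ((Finset.Icc D M).biUnion (fun d => (F d).biUnion
        (fun f => box.image (fun p : ℤ × ℤ => MvPolynomial.eval ![p.1, p.2] f)))).card + 1 :=
        Finset.card_insert_le _ _
    _ ≤ (∑ d ∈ Finset.Icc D M, ((F d).biUnion
        (fun f => box.image (fun p : ℤ × ℤ => MvPolynomial.eval ![p.1, p.2] f))).card) + 1 :=
        Nat.add_le_add_right Finset.card_biUnion_le _
    _ ≤ (∑ _d ∈ Finset.Icc D M, M ^ A₁ * (2*B+1)^2) + 1 :=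
        Nat.add_le_add_right (Finset.sum_le_sum hinner) _
    _ = (Finset.Icc D M).card * (M ^ A₁ * (2*B+1)^2) + 1 := by
        rw [Finset.sum_const, smul_eq_mul]
    _ ≤ (M+1) * (M ^ A₁ * (2*B+1)^2) + 1 := by
        apply Nat.add_le_add_right
        apply Nat.mul_le_mul_right
        rw [Nat.card_Icc]; omega
    _ = 1 + (M+1) * (M ^ A₁ * (2*B+1)^2) := by ring
  have hncard : ({m : ℤ | |m| ≤ (N : ℤ) ∧ ∃ d : ℕ, D ≤ d ∧ ∃ f ∈ F d, ∃ x y : ℤ,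
      (A : ℤ) ≤ max |x| |y| ∧ MvPolynomial.eval ![x, y] f = m}).ncard ≤
      1 + (M+1) * (M ^ A₁ * (2*B+1)^2) := by
    calc _ ≤ (↑G : Set ℤ).ncard := Set.ncard_le_ncard hsub G.finite_toSet
    _ = G.card := Set.ncard_coe_finset G
    _ ≤ _ := hcardG
  -- Step 3: real estimates
  have hone : ∀ t : ℝ, 0 ≤ t → 1 ≤ (N:ℝ) ^ t := by
    intro t ht
    rw [show (1:ℝ) = (N:ℝ) ^ (0:ℝ) from (Real.rpow_zero _).symm]
    exact Real.rpow_le_rpow_of_exponent_le hN1 ht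
  have hfinal : (1 + (M+1) * (M ^ A₁ * (2*B+1)^2) : ℝ) ≤ (N:ℝ) ^ ε := by
    -- bound M+1 by C₁ * L
    have hM1 : ((M:ℝ)+1) ≤ C₁ * L := by
      have hfl : (⌊L / Real.log c⌋₊ : ℝ) ≤ (1/Real.log c) * L :=
        le_trans (Nat.floor_le (by positivity)) (le_of_eq (by ring))
      have hd : ((d₀:ℝ)+1) ≤ ((d₀:ℝ)+1) * L := le_mul_of_one_le_right (by positivity) hL1
      have e1 : (M:ℝ) + 1 ≤ ((d₀:ℝ)+1) + (1/Real.log c) * L := by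
        rw [hM_def]; push_cast; linarith
      calc (M:ℝ)+1 ≤ ((d₀:ℝ)+1) + (1/Real.log c)*L := e1
      _ ≤ ((d₀:ℝ)+1)*L + (1/Real.log c)*L := by linarith
      _ = C₁ * L := by rw [hC₁_def]; ring
    have hC₁L : 0 ≤ C₁ * L := by positivity
    have hMpow : ((M:ℝ)+1) * (M:ℝ)^A₁ ≤ (C₁*L)^(A₁+1) := by
      have h1 : (M:ℝ)^A₁ ≤ (C₁*L)^A₁ :=
        pow_le_pow_left₀ (by positivity) (by linarith) A₁
      calc ((M:ℝ)+1)*(M:ℝ)^A₁ ≤ (C₁*L)*(C₁*L)^A₁ :=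
            mul_le_mul hM1 h1 (by positivity) hC₁L
      _ = (C₁*L)^(A₁+1) := by rw [pow_succ]; ring
    -- bound L by N^δ/δ
    have hLN : L ≤ (N:ℝ)^δ / δ := by
      have h1 : Real.log ((N:ℝ)^δ) ≤ (N:ℝ)^δ - 1 :=
        Real.log_le_sub_one_of_pos (by positivity)
      rw [Real.log_rpow hN0] at h1
      rw [hL_def, le_div_iff₀ hδ0]
      linarith
    have hCL : (C₁*L)^(A₁+1) ≤ C₂ * (N:ℝ)^(ε/8) := by
      have h1 : C₁*L ≤ (C₁/δ) * (N:ℝ)^δ := by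
        calc C₁*L ≤ C₁*((N:ℝ)^δ/δ) := mul_le_mul_of_nonneg_left hLN hC₁0.le
        _ = (C₁/δ)*(N:ℝ)^δ := by ring
      calc (C₁*L)^(A₁+1) ≤ ((C₁/δ)*(N:ℝ)^δ)^(A₁+1) := pow_le_pow_left₀ hC₁L h1 _
      _ = (C₁/δ)^(A₁+1) * ((N:ℝ)^δ)^(A₁+1) := mul_pow _ _ _
      _ = C₂ * (N:ℝ)^(δ*(A₁+1)) := by
          rw [hC₂_def, ← Real.rpow_natCast ((N:ℝ)^δ) (A₁+1), ← Real.rpow_mul hN0.le]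
          push_cast; ring_nf
      _ = C₂ * (N:ℝ)^(ε/8) := by
          congr 1
          rw [hδ_def]
          congr 1
          field_simp
    -- bound the box side
    have hBb : (B:ℝ) ≤ κ * (N:ℝ)^((1:ℝ)/R) := by
      rw [hB_def]; exact Nat.floor_le (by positivity)
    have hNr1 : 1 ≤ (N:ℝ)^((1:ℝ)/R) := hone _ (by positivity)
    have h2B : (2*(B:ℝ)+1) ≤ (2*κ+1)*(N:ℝ)^((1:ℝ)/R) := by
      calc 2*(B:ℝ)+1 ≤ 2*(κ*(N:ℝ)^((1:ℝ)/R)) + (N:ℝ)^((1:ℝ)/R) := by linarith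
      _ = (2*κ+1)*(N:ℝ)^((1:ℝ)/R) := by ring
    have h2B2 : (2*(B:ℝ)+1)^2 ≤ (2*κ+1)^2 * (N:ℝ)^(ε/2) := by
      calc (2*(B:ℝ)+1)^2 ≤ ((2*κ+1)*(N:ℝ)^((1:ℝ)/R))^2 :=
            pow_le_pow_left₀ (by positivity) h2B 2
      _ = (2*κ+1)^2 * ((N:ℝ)^((1:ℝ)/R))^2 := mul_pow _ _ _
      _ = (2*κ+1)^2 * (N:ℝ)^(2/R) := by
          rw [← Real.rpow_natCast ((N:ℝ)^((1:ℝ)/R)) 2, ← Real.rpow_mul hN0.le]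
          congr 1
          push_cast; ring
      _ ≤ (2*κ+1)^2 * (N:ℝ)^(ε/2) :=
          mul_le_mul_of_nonneg_left
            (Real.rpow_le_rpow_of_exponent_le hN1 hRε) (by positivity)
    -- combine
    have hprod : ((M:ℝ)+1) * ((M:ℝ)^A₁ * (2*(B:ℝ)+1)^2) ≤ C₃ * (N:ℝ)^(5*ε/8) := by
      calc ((M:ℝ)+1) * ((M:ℝ)^A₁ * (2*(B:ℝ)+1)^2)
          = (((M:ℝ)+1) * (M:ℝ)^A₁) * (2*(B:ℝ)+1)^2 := by ring
      _ ≤ (C₁*L)^(A₁+1) * ((2*κ+1)^2 * (N:ℝ)^(ε/2)) :=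
          mul_le_mul hMpow h2B2 (by positivity) (by positivity)
      _ ≤ (C₂ * (N:ℝ)^(ε/8)) * ((2*κ+1)^2 * (N:ℝ)^(ε/2)) :=
          mul_le_mul_of_nonneg_right hCL (by positivity)
      _ = C₃ * ((N:ℝ)^(ε/8) * (N:ℝ)^(ε/2)) := by rw [hC₃_def]; ring
      _ = C₃ * (N:ℝ)^(5*ε/8) := by
          rw [← Real.rpow_add hN0]
          congr 1
          ring
    have h1C₃ : 1 + C₃ ≤ (N:ℝ)^(3*ε/8) := by
      have hNc : (1+C₃)^((8:ℝ)/(3*ε)) ≤ (N:ℝ) := by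
        have h := Nat.le_ceil ((1+C₃)^((8:ℝ)/(3*ε)))
        have h2 : (⌈(1+C₃)^((8:ℝ)/(3*ε))⌉₊ + 1 : ℕ) ≤ N := le_trans (le_max_right _ _) hN
        calc (1+C₃)^((8:ℝ)/(3*ε)) ≤ (⌈(1+C₃)^((8:ℝ)/(3*ε))⌉₊:ℝ) := h
        _ ≤ (N:ℝ) := by exact_mod_cast le_trans (Nat.le_succ _) h2
      have heq : ((1+C₃)^((8:ℝ)/(3*ε)))^((3*ε)/8) = 1+C₃ := by
        rw [← Real.rpow_mul (by positivity : (0:ℝ) ≤ 1+C₃),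
          show (8:ℝ)/(3*ε)*((3*ε)/8) = 1 from by field_simp, Real.rpow_one]
      calc 1+C₃ = ((1+C₃)^((8:ℝ)/(3*ε)))^((3*ε)/8) := heq.symm
      _ ≤ (N:ℝ)^(3*ε/8) := Real.rpow_le_rpow (by positivity) hNc (by positivity)
    have honeN : (1:ℝ) ≤ (N:ℝ)^(5*ε/8) := hone _ (by positivity)
    push_cast
    calc (1 + ((M:ℝ)+1) * ((M:ℝ)^A₁ * (2*(B:ℝ)+1)^2) : ℝ)
        ≤ 1 + C₃ * (N:ℝ)^(5*ε/8) := by linarith only [hprod]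
    _ ≤ (1+C₃) * (N:ℝ)^(5*ε/8) := by
        have h := add_le_add_left honeN (C₃ * (N:ℝ)^(5*ε/8))
        calc (1:ℝ) + C₃ * (N:ℝ)^(5*ε/8) ≤ (N:ℝ)^(5*ε/8) + C₃ * (N:ℝ)^(5*ε/8) := h
        _ = (1+C₃) * (N:ℝ)^(5*ε/8) := by ring
    _ ≤ (N:ℝ)^(3*ε/8) * (N:ℝ)^(5*ε/8) :=
        mul_le_mul_of_nonneg_right h1C₃ (by positivity)
    _ = (N:ℝ)^ε := by
        rw [← Real.rpow_add hN0]
        congr 1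
        ring
  calc (({m : ℤ | |m| ≤ (N : ℤ) ∧ ∃ d : ℕ, D ≤ d ∧ ∃ f ∈ F d, ∃ x y : ℤ,
      (A : ℤ) ≤ max |x| |y| ∧ MvPolynomial.eval ![x, y] f = m}).ncard : ℝ)
      ≤ (1 + (M+1) * (M ^ A₁ * (2*B+1)^2) : ℝ) := by exact_mod_cast hncard
  _ ≤ (N:ℝ) ^ ε := hfinal
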